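/- Let f : ℝ → ℝ be a function that is given on all of ℝ by its Taylor series at the origin, i.e. f(t) = Σ_{n=0}^∞ (f⁽ⁿ⁾(0)/n!)·tⁿ for every t ∈ ℝ. Then for every t ∈ ℝ the series Σ_{n=0}^∞ (−1)ⁿ·(f⁽ⁿ⁾(t)/n!)·tⁿ converges absolutely, i.e. Σ_{n=0}^∞ |f⁽ⁿ⁾(t)|·|t|ⁿ/n! < ∞. -/

import Mathlib

open Filter Topology

/-- The series `Σ aₙ` converges (in the sense of convergence of partial sums) to `s`. -/
def SumsTo (a : ℕ → ℝ) (s : ℝ) : Prop :=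
  Tendsto (fun N => ∑ n ∈ Finset.range N, a n) atTop (𝓝 s)

/-- If `f : ℝ → ℝ` is given on all of `ℝ` by its Taylor series at the origin, then for
every `t` the series `Σ (−1)ⁿ (f⁽ⁿ⁾(t)/n!) tⁿ` converges absolutely, i.e.
`Σ |f⁽ⁿ⁾(t)| |t|ⁿ / n! < ∞`. -/
theorem stmt_1 (f : ℝ → ℝ)
    (hTaylor : ∀ t : ℝ,
      SumsTo (fun n => (iteratedDeriv n f 0 / (n.factorial : ℝ)) * t ^ n) (f t)) :
    ∀ t : ℝ,
      Summable (fun n => |iteratedDeriv n f t| * |t| ^ n / (n.factorial : ℝ)) := by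
  intro t
  set c : ℕ → ℝ := fun n => iteratedDeriv n f 0 / (n.factorial : ℝ) with hc
  set p := FormalMultilinearSeries.ofScalars ℝ c with hp
  have hnorm : ∀ n, ‖p n‖ = ‖c n‖ := fun n => FormalMultilinearSeries.ofScalars_norm ℝ c n
  -- terms tend to zero at every point
  have hterm : ∀ x : ℝ, Tendsto (fun n => c n * x ^ n) atTop (𝓝 0) := by
    intro x
    have h := hTaylor x
    have h1 : Tendsto (fun N => ∑ n ∈ Finset.range (N + 1), c n * x ^ n) atTop (𝓝 (f x)) :=
      h.comp (tendsto_add_atTop_nat 1)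
    have h2 := h1.sub h
    simp only [hc, Finset.sum_range_succ, add_sub_cancel_left, sub_self] at h2
    exact h2
  have hrad : p.radius = ⊤ := by
    refine ENNReal.eq_top_of_forall_nnreal_le fun r => ?_
    refine p.le_radius_of_tendsto (l := 0) ?_
    have h := ((hterm r).abs : Tendsto (fun n => |c n * (r : ℝ) ^ n|) atTop (𝓝 |0|))
    rw [abs_zero] at h
    refine h.congr fun n => ?_
    rw [abs_mul, abs_pow, abs_of_nonneg r.coe_nonneg, hnorm n, Real.norm_eq_abs]
  have hradpos : 0 < p.radius := by rw [hrad]; exact ENNReal.zero_lt_top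
  have h0 : HasFPowerSeriesOnBall p.sum p 0 p.radius :=
    p.hasFPowerSeriesOnBall hradpos
  have hfeq : f = p.sum := by
    funext x
    have hx : x ∈ EMetric.ball (0 : ℝ) p.radius := by
      rw [hrad]; exact edist_lt_top x 0
    have hs : HasSum (fun n => p n fun _ => x) (p.sum x) := p.hasSum hx
    have hs' : Tendsto (fun N => ∑ n ∈ Finset.range N, p n fun _ => x) atTop (𝓝 (p.sum x)) :=
      hs.tendsto_sum_nat
    have hT := hTaylor x
    refine tendsto_nhds_unique ?_ hs'
    refine hT.congr fun N => Finset.sum_congr rfl fun n _ => ?_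
    rw [FormalMultilinearSeries.ofScalars_apply_eq, smul_eq_mul]
  rw [hfeq] at hTaylor ⊢
  have hf : HasFPowerSeriesOnBall p.sum p 0 ⊤ := by rwa [hrad] at h0
  have hq0 : HasFPowerSeriesOnBall p.sum (p.changeOrigin t) (0 + t) (⊤ - ‖t‖₊) :=
    hf.changeOrigin (by exact ENNReal.coe_lt_top)
  set q := p.changeOrigin t with hqdef
  have hq : HasFPowerSeriesOnBall p.sum q t ⊤ := by
    rwa [zero_add, ENNReal.top_sub_coe] at hq0
  -- identify iterated derivatives with coefficients of q
  have hder : ∀ n : ℕ, iteratedDeriv n p.sum t = (n.factorial : ℝ) * q.coeff n := by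
    intro n
    have := hq.factorial_smul (1 : ℝ) n
    rw [iteratedDeriv_eq_iteratedFDeriv, ← this, nsmul_eq_mul]
    rfl
  -- summability from radius of q
  have hqr : (↑‖t‖₊ : ENNReal) < q.radius := lt_of_lt_of_le ENNReal.coe_lt_top hq.r_le
  have hsum : Summable fun n => ‖q n‖ * (‖t‖₊ : ℝ) ^ n := q.summable_norm_mul_pow hqr
  refine hsum.congr fun n => ?_
  rw [hder n, q.norm_apply_eq_norm_coef]
  have hfac : (0 : ℝ) < (n.factorial : ℝ) := by positivity
  rw [abs_mul, abs_of_nonneg hfac.le]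
  have : (‖t‖₊ : ℝ) = |t| := rfl
  rw [this]
  field_simp
  rw [Real.norm_eq_abs]; ring
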